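/- Let A be a feasible Steiner forest with components A_1,…,A_p numbered by nondecreasing width, and let C=(e_1,…,e_{|C|}) be a guarded circuit in G_A visiting nodes v_1,…,v_{|C|+1}=v_1, where v_1 ≥ v_i for all i, the distinct visited nodes are ξ_1 > ξ_2 > … > ξ_s (so v_1=ξ_1), and n_ℓ is the number of times C visits ξ_ℓ. Suppose A is c-approximate connecting move optimal and there exists a set 𝔐 of trees in G_A such that (1) the trees in 𝔐 are edge-disjoint and use only edges of C, and (2) for each ℓ ∈ {2,…,s} at least n_ℓ trees of 𝔐 pay for ξ_ℓ. Then Σ_{i=2}^{|C|} w(A_{v_i}) = Σ_{ℓ=2}^{s} n_ℓ·w(A_{ξ_ℓ}) ≤ c·Σ_{i=1}^{|C|} d_{e_i} = c·d(C). -/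

import Mathlib

open Finset

attribute [local instance] Classical.propDecidable

variable {V : Type*} [Fintype V] [DecidableEq V]

/-- The simple graph on `V` induced by a finite set of (undirected) edges. -/
def graphOf (F : Finset (Sym2 V)) : SimpleGraph V where
  Adj u v := u ≠ v ∧ s(u, v) ∈ F
  symm := by
    refine ⟨fun u v h => ?_⟩
    refine ⟨Ne.symm h.1, ?_⟩
    rw [Sym2.eq_swap]
    exact h.2
  loopless := by refine ⟨fun v h => ?_⟩; exact h.1 rfl

/-- The set of vertices incident to at least one edge of `F` (denoted `V[F]` in the paper). -/
def supp (F : Finset (Sym2 V)) : Set V := {v | ∃ e ∈ F, v ∈ e}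

/-- A Steiner forest `F` is feasible for the terminal pairs `T` if it connects every pair. -/
def Feasible (F : Finset (Sym2 V)) (T : Finset (V × V)) : Prop :=
  ∀ p ∈ T, (graphOf F).Reachable p.1 p.2

/-- Total edge cost `d(F)`. -/
def cost (d : Sym2 V → ℝ) (F : Finset (Sym2 V)) : ℝ := ∑ e ∈ F, d e

/-- `A` is a tree (on its vertex support): loopless edges, acyclic, connected on `V[A]`. -/
def IsTreeSol (A : Finset (Sym2 V)) : Prop :=
  (∀ e ∈ A, ¬ e.IsDiag) ∧ (graphOf A).IsAcyclic ∧
    ∀ u ∈ supp A, ∀ v ∈ supp A, (graphOf A).Reachable u v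

/-- Shortest-path distance between `u` and `v` in the graph with edge set `Eall`
and edge lengths `d`. -/
noncomputable def wdist (Eall : Finset (Sym2 V)) (d : Sym2 V → ℝ) (u v : V) : ℝ :=
  ⨅ p : (graphOf Eall).Walk u v, (p.edges.map d).sum

/-- Width of a vertex set `W`: the largest shortest-path distance of a terminal pair
whose two members both lie in `W`. -/
noncomputable def widthSet (Eall : Finset (Sym2 V)) (d : Sym2 V → ℝ) (T : Finset (V × V))
    (W : Set V) : ℝ :=
  sSup {x : ℝ | ∃ p ∈ T, p.1 ∈ W ∧ p.2 ∈ W ∧ x = wdist Eall d p.1 p.2}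

/-- Total width `w(F)`: the sum of the widths of the connected components of `F`. -/
noncomputable def totalWidth (Eall : Finset (Sym2 V)) (d : Sym2 V → ℝ) (T : Finset (V × V))
    (F : Finset (Sym2 V)) : ℝ :=
  ∑ᶠ c : (graphOf F).ConnectedComponent, widthSet Eall d T c.supp

/-- The potential `φ(F) = d(F) + w(F)`. -/
noncomputable def phi (Eall : Finset (Sym2 V)) (d : Sym2 V → ℝ) (T : Finset (V × V))
    (F : Finset (Sym2 V)) : ℝ :=
  cost d F + totalWidth Eall d T F

/-- Some edge of `F` leaves the vertex set `W`. -/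
def leavesSet (F : Finset (Sym2 V)) (W : Set V) : Prop :=
  ∃ g ∈ F, ∃ x y : V, g = s(x, y) ∧ x ∈ W ∧ y ∉ W

/-- `T_{e,f}`: the connected component of `A ∖ {e,f}` containing the interior of the
unique `e`–`f` path of the tree `A`; equivalently, the component containing an endpoint
of `e` together with an endpoint of `f`. -/
def midComp (A : Finset (Sym2 V)) (e f : Sym2 V) : Set V :=
  {v | ∃ x ∈ e, ∃ y ∈ f,
    (graphOf (A \ {e, f})).Reachable x y ∧ (graphOf (A \ {e, f})).Reachable x v}

/-- `e` and `f` are compatible w.r.t. `F` (`e ~cp f`). -/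
def Compatible (A F : Finset (Sym2 V)) (e f : Sym2 V) : Prop :=
  e = f ∨ ¬ leavesSet F (midComp A e f)

/-- `e` is safe: some `F`-edge crosses between the two components of `A ∖ {e}`. -/
def Safe (A F : Finset (Sym2 V)) (e : Sym2 V) : Prop :=
  ∃ g ∈ F, ∃ x y : V, g = s(x, y) ∧ x ≠ y ∧ ¬ (graphOf (A.erase e)).Reachable x y

/-- `e` is essential: removing it from `A` destroys feasibility. -/
def Essential (A : Finset (Sym2 V)) (T : Finset (V × V)) (e : Sym2 V) : Prop :=
  ¬ Feasible (A.erase e) T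

/-- The compatibility class of the edge `e` of `A`. -/
noncomputable def cls (A F : Finset (Sym2 V)) (e : Sym2 V) : Finset (Sym2 V) :=
  A.filter (fun f => Compatible A F e f)

/-- `S_u`: the set of unsafe edges of `A`. -/
noncomputable def unsafeCls (A F : Finset (Sym2 V)) : Finset (Sym2 V) :=
  A.filter (fun e => ¬ Safe A F e)

/-- `𝔖`: the set of compatibility classes of edges of `A`. -/
noncomputable def classes (A F : Finset (Sym2 V)) : Finset (Finset (Sym2 V)) :=
  A.image (cls A F)

/-- `e` lies on the fundamental cycle closed by adding the edge `f` to the tree `A`. -/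
def onFundCycle (A : Finset (Sym2 V)) (f e : Sym2 V) : Prop :=
  e ∈ A ∧ ∀ x y : V, f = s(x, y) →
    (graphOf A).Reachable x y ∧ ¬ (graphOf (A.erase e)).Reachable x y

/-- Edge/edge swap optimality of `A` w.r.t. added edges from `Eadd` and objective `obj`:
no swap that adds an edge `f ∈ Eadd` and removes one edge of the cycle it closes,
keeping feasibility, strictly decreases the objective. -/
def EdgeEdgeSwapOptimal (Eadd : Finset (Sym2 V)) (T : Finset (V × V))
    (obj : Finset (Sym2 V) → ℝ) (A : Finset (Sym2 V)) : Prop :=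
  ∀ f ∈ Eadd, ∀ e, onFundCycle A f e →
    Feasible (A.erase e ∪ {f}) T → obj A ≤ obj (A.erase e ∪ {f})

/-- Edge/set swap optimality of `A` w.r.t. added edges from `Eadd` and objective `obj`:
no swap that adds an edge `f ∈ Eadd` and removes a set `S` of edges of the cycle it closes,
keeping feasibility, strictly decreases the objective. -/
def EdgeSetSwapOptimal (Eadd : Finset (Sym2 V)) (T : Finset (V × V))
    (obj : Finset (Sym2 V) → ℝ) (A : Finset (Sym2 V)) : Prop :=
  ∀ f ∈ Eadd, ∀ S ⊆ A, (∀ e ∈ S, onFundCycle A f e) →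
    Feasible ((A \ S) ∪ {f}) T → obj A ≤ obj ((A \ S) ∪ {f})

/-- Removing swap optimality: deleting any (feasibility preserving) edge set from `A`
does not strictly decrease the objective. -/
def RemovingSwapOptimal (T : Finset (V × V))
    (obj : Finset (Sym2 V) → ℝ) (A : Finset (Sym2 V)) : Prop :=
  ∀ S ⊆ A, Feasible (A \ S) T → obj A ≤ obj (A \ S)

/-- Path/set swap optimality of `A`: for vertices `u, v` in the same component of `A`,
adding a set `P ⊆ Eadd` of edges (along a `u`–`v` connection) and removing a set `S` of
edges of the component of `u`, in a way that keeps `u,v` connected and the solution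
feasible, does not strictly decrease the objective. -/
def PathSetSwapOptimal (Eadd : Finset (Sym2 V)) (T : Finset (V × V))
    (obj : Finset (Sym2 V) → ℝ) (A : Finset (Sym2 V)) : Prop :=
  ∀ u v : V, (graphOf A).Reachable u v →
    ∀ P : Finset (Sym2 V), P ⊆ Eadd → ∀ S ⊆ A,
      (∀ e ∈ S, ∃ x ∈ e, (graphOf A).Reachable u x) →
      (graphOf ((A \ S) ∪ P)).Reachable u v →
      Feasible ((A \ S) ∪ P) T → obj A ≤ obj ((A \ S) ∪ P)

/-- A connected component `c` of `A ∖ S` is an *inner* component for the class `S`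
if it touches (at least) two distinct edges of `S`. -/
def innerComp (A S : Finset (Sym2 V)) (c : (graphOf (A \ S)).ConnectedComponent) : Prop :=
  ∃ e ∈ S, ∃ e' ∈ S, e ≠ e' ∧ (∃ x ∈ e, (graphOf (A \ S)).connectedComponentMk x = c) ∧
    ∃ y ∈ e', (graphOf (A \ S)).connectedComponentMk y = c

/-- The sum of the widths of the inner components `E_{S,i}`, `i ∈ In_S`, of the class `S`. -/
noncomputable def innerWidthSum (Eall : Finset (Sym2 V)) (d : Sym2 V → ℝ) (T : Finset (V × V))
    (A S : Finset (Sym2 V)) : ℝ :=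
  ∑ᶠ c : (graphOf (A \ S)).ConnectedComponent,
    if innerComp A S c then widthSet Eall d T c.supp else 0

/-- `index(E')` for a vertex set `W`: the largest index `i` (in the enumeration `tp` of the
terminal pairs by nondecreasing distance) of a terminal pair lying entirely inside `W`. -/
noncomputable def idxOf {nt : ℕ} (tp : Fin nt → V × V) (W : Set V) : ℕ :=
  sSup {i : ℕ | ∃ h : i < nt, (tp ⟨i, h⟩).1 ∈ W ∧ (tp ⟨i, h⟩).2 ∈ W}

/-- The finite vertex support of an edge set. -/
def suppF (B : Finset (Sym2 V)) : Finset V :=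
  Finset.univ.filter (fun v => ∃ e ∈ B, v ∈ e)

/-- `e` crosses between two different connected components of `A`. -/
def crossingEdge (A : Finset (Sym2 V)) (e : Sym2 V) : Prop :=
  ∀ x y : V, e = s(x, y) → ¬ (graphOf A).Reachable x y

/-- The components of `A` touched by the edge set `B`, i.e. the nodes of `G_A`
incident to `B`. -/
noncomputable def touched (A B : Finset (Sym2 V)) :
    Finset ((graphOf A).ConnectedComponent) :=
  (suppF B).image ((graphOf A).connectedComponentMk)

/-- `B` is (the edge set of) a tree in the contracted multigraph `G_A`: all its edges cross
between components of `A`, it is connected (through the components of `A` it touches), and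
it has one edge less than the number of components it touches. -/
def IsGATree (A B : Finset (Sym2 V)) : Prop :=
  (∀ e ∈ B, crossingEdge A e) ∧ (touched A B).card = B.card + 1 ∧
    ∀ x ∈ suppF B, ∀ y ∈ suppF B, (graphOf (A ∪ B)).Reachable x y

/-- `A` is `c`-approximate connecting move optimal: for every tree `B` in `G_A` (with edges
taken from `Emoves`), the total width of the components it connects, minus the largest of
these widths, is at most `c` times the length of the tree. -/
def ConnApproxOptimal (Emoves Eall : Finset (Sym2 V)) (d : Sym2 V → ℝ) (T : Finset (V × V))
    (c : ℝ) (A : Finset (Sym2 V)) : Prop :=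
  ∀ B ⊆ Emoves, IsGATree A B →
    (∑ t ∈ touched A B, widthSet Eall d T t.supp)
      - (⨆ t ∈ touched A B, widthSet Eall d T t.supp) ≤ c * ∑ e ∈ B, d e


lemma wdist_nonneg' {V : Type*} [Fintype V] [DecidableEq V]
    (Eall : Finset (Sym2 V)) (d : Sym2 V → ℝ) (hd : ∀ e, 0 ≤ d e) (u v : V) :
    0 ≤ wdist Eall d u v := by
  apply Real.iInf_nonneg
  intro p
  apply List.sum_nonneg
  intro x hx
  rcases List.mem_map.mp hx with ⟨e, _, rfl⟩
  exact hd e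

lemma widthSet_nonneg' {V : Type*} [Fintype V] [DecidableEq V]
    (Eall : Finset (Sym2 V)) (d : Sym2 V → ℝ) (hd : ∀ e, 0 ≤ d e)
    (T : Finset (V × V)) (W : Set V) : 0 ≤ widthSet Eall d T W := by
  apply Real.sSup_nonneg
  rintro x ⟨p, _, _, _, rfl⟩
  exact wdist_nonneg' Eall d hd p.1 p.2

theorem stmt16_treedecomp_to_lowerbound
    (Eall : Finset (Sym2 V)) (d : Sym2 V → ℝ) (hd : ∀ e, 0 ≤ d e)
    (T : Finset (V × V)) (A : Finset (Sym2 V)) (hAE : A ⊆ Eall)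
    (hAfeas : Feasible A T)
    -- numbering of the components of `A` by nondecreasing width
    (ci : V → ℕ)
    (hci : ∀ u v : V, ci u = ci v ↔ (graphOf A).Reachable u v)
    (hmono : ∀ u v : V, ci u ≤ ci v →
      widthSet Eall d T ((graphOf A).connectedComponentMk u).supp ≤
        widthSet Eall d T ((graphOf A).connectedComponentMk v).supp)
    (c : ℝ) (hc : 1 ≤ c)
    (hopt : ConnApproxOptimal Eall Eall d T c A)
    -- a guarded circuit `C` in `G_A`, edge i joining the components of `a i` and `b i`
    (n : ℕ) (hn : 0 < n) (a b : Fin n → V)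
    (hedges : ∀ i, s(a i, b i) ∈ Eall)
    (hcross : ∀ i, ¬ (graphOf A).Reachable (a i) (b i))
    (hconsec : ∀ i : Fin n,
      (graphOf A).Reachable (b i) (a ⟨((i : ℕ) + 1) % n, Nat.mod_lt _ hn⟩))
    (hinj : Function.Injective (fun i : Fin n => s(a i, b i)))
    (hguard : ∀ i : Fin n, i ≠ ⟨0, hn⟩ → ci (a i) < ci (a ⟨0, hn⟩))
    -- the tree packing 𝔐
    (𝔐 : Finset (Finset (Sym2 V)))
    (hdisj : ∀ B ∈ 𝔐, ∀ B' ∈ 𝔐, B ≠ B' → Disjoint B B')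
    (htree : ∀ B ∈ 𝔐, IsGATree A B)
    (hsubC : ∀ B ∈ 𝔐, ∀ e ∈ B, ∃ i : Fin n, e = s(a i, b i))
    -- every node ξ other than the maximal one is paid for by at least n_ξ trees
    (hpay : ∀ k : ℕ, k ≠ ci (a ⟨0, hn⟩) →
      (Finset.univ.filter (fun i : Fin n => ci (a i) = k)).card ≤
        (𝔐.filter (fun B =>
          (∃ v ∈ suppF B, ci v = k) ∧ ∃ v ∈ suppF B, k < ci v)).card) :
    ∑ i ∈ Finset.univ.filter (fun i : Fin n => i ≠ ⟨0, hn⟩),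
        widthSet Eall d T ((graphOf A).connectedComponentMk (a i)).supp
      ≤ c * ∑ i : Fin n, d s(a i, b i) := by
  
  classical
  have hw0 : ∀ t : (graphOf A).ConnectedComponent, 0 ≤ widthSet Eall d T t.supp :=
    fun t => widthSet_nonneg' Eall d hd T t.supp
  -- index of a component
  set cidx : (graphOf A).ConnectedComponent → ℕ :=
    fun t => ci (Classical.choose t.exists_rep) with hcidx_def
  have hcidx : ∀ v : V, cidx ((graphOf A).connectedComponentMk v) = ci v := by
    intro v
    have hsp := Classical.choose_spec ((graphOf A).connectedComponentMk v).exists_rep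
    exact (hci _ _).mpr (SimpleGraph.ConnectedComponent.eq.mp hsp)
  have hwmono : ∀ t t' : (graphOf A).ConnectedComponent, cidx t ≤ cidx t' →
      widthSet Eall d T t.supp ≤ widthSet Eall d T t'.supp := by
    intro t t' h
    have h1 := Classical.choose_spec t.exists_rep
    have h2 := Classical.choose_spec t'.exists_rep
    have h3 := hmono _ _ h
    rw [← h1, ← h2]
    exact h3
  -- canonical component of an index
  set compOf : ℕ → (graphOf A).ConnectedComponent :=
    fun k => (graphOf A).connectedComponentMk
      (if h : ∃ v : V, ci v = k then h.choose else a ⟨0, hn⟩) with hcompOf_def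
  have hcompOf : ∀ (v : V) (k : ℕ), ci v = k →
      (graphOf A).connectedComponentMk v = compOf k := by
    intro v k hk
    have h : ∃ v : V, ci v = k := ⟨v, hk⟩
    rw [hcompOf_def]
    simp only [dif_pos h]
    exact SimpleGraph.ConnectedComponent.eq.mpr
      ((hci _ _).mp (hk.trans h.choose_spec.symm))
  have hcidx_compOf : ∀ k : ℕ, (∃ v : V, ci v = k) → cidx (compOf k) = k := by
    rintro k ⟨v, hv⟩
    rw [← hcompOf v k hv, hcidx, hv]
  have hBsub : ∀ B ∈ 𝔐, B ⊆ Eall := by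
    intro B hB e he
    obtain ⟨i, rfl⟩ := hsubC B hB e he
    exact hedges i
  -- per-tree bound
  have hperB : ∀ B ∈ 𝔐, ∀ K : Finset ℕ,
      (∀ k ∈ K, (∃ v ∈ suppF B, ci v = k) ∧ ∃ v ∈ suppF B, k < ci v) →
      ∑ k ∈ K, widthSet Eall d T (compOf k).supp ≤ c * ∑ e ∈ B, d e := by
    intro B hB K hK
    obtain ⟨hcr, hcard, hconn⟩ := htree B hB
    have hne : (touched A B).Nonempty := by
      rw [← Finset.card_pos, hcard]; omega
    obtain ⟨m, hm, hmax⟩ := Finset.exists_max_image (touched A B) cidx hne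
    have hmem : ∀ k ∈ K, compOf k ∈ (touched A B).erase m := by
      intro k hk
      obtain ⟨⟨v, hv, hvk⟩, ⟨v', hv', hv'k⟩⟩ := hK k hk
      have h1 : compOf k ∈ touched A B := by
        rw [← hcompOf v k hvk]
        exact Finset.mem_image_of_mem _ hv
      refine Finset.mem_erase.mpr ⟨?_, h1⟩
      intro hEq
      have h2 : cidx (compOf k) = k := hcidx_compOf k ⟨v, hvk⟩
      have h3 : (graphOf A).connectedComponentMk v' ∈ touched A B :=
        Finset.mem_image_of_mem _ hv'
      have h4 := hmax _ h3
      rw [hcidx] at h4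
      rw [hEq] at h2
      omega
    have hinjK : ∀ k ∈ K, ∀ k' ∈ K, compOf k = compOf k' → k = k' := by
      intro k hk k' hk' hEq
      obtain ⟨⟨v, hv, hvk⟩, -⟩ := hK k hk
      obtain ⟨⟨v', hv', hv'k⟩, -⟩ := hK k' hk'
      have h2 : cidx (compOf k) = k := hcidx_compOf k ⟨v, hvk⟩
      have h3 : cidx (compOf k') = k' := hcidx_compOf k' ⟨v', hv'k⟩
      rw [hEq] at h2
      omega
    calc ∑ k ∈ K, widthSet Eall d T (compOf k).supp
        = ∑ t ∈ K.image compOf, widthSet Eall d T t.supp := by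
          rw [Finset.sum_image hinjK]
      _ ≤ ∑ t ∈ (touched A B).erase m, widthSet Eall d T t.supp := by
          apply Finset.sum_le_sum_of_subset_of_nonneg
          · intro t ht
            obtain ⟨k, hk, rfl⟩ := Finset.mem_image.mp ht
            exact hmem k hk
          · intro t _ _; exact hw0 t
      _ = (∑ t ∈ touched A B, widthSet Eall d T t.supp) - widthSet Eall d T m.supp := by
          rw [eq_sub_iff_add_eq]
          exact Finset.sum_erase_add _ _ hm
      _ ≤ (∑ t ∈ touched A B, widthSet Eall d T t.supp)
            - ⨆ t ∈ touched A B, widthSet Eall d T t.supp := by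
          apply sub_le_sub_left
          apply Real.iSup_le _ (hw0 m)
          intro t
          apply Real.iSup_le _ (hw0 m)
          intro ht
          exact hwmono _ _ (hmax t ht)
      _ ≤ c * ∑ e ∈ B, d e := hopt B (hBsub B hB) (htree B hB)
  -- the set of indices occurring on the circuit (other than the maximum)
  set s : Finset (Fin n) := Finset.univ.filter (fun i : Fin n => i ≠ ⟨0, hn⟩) with hs_def
  set Kt : Finset ℕ := s.image (fun i => ci (a i)) with hKt_def
  have step1 : ∑ i ∈ s, widthSet Eall d T ((graphOf A).connectedComponentMk (a i)).supp
      = ∑ k ∈ Kt, (s.filter (fun i => ci (a i) = k)).card • widthSet Eall d T (compOf k).supp := by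
    rw [← Finset.sum_fiberwise_of_maps_to (s := s) (t := Kt) (g := fun i => ci (a i))
      (fun i hi => Finset.mem_image_of_mem _ hi)
      (fun i => widthSet Eall d T ((graphOf A).connectedComponentMk (a i)).supp)]
    apply Finset.sum_congr rfl
    intro k hk
    rw [Finset.sum_congr rfl (fun i hi => by
      rw [hcompOf (a i) k (Finset.mem_filter.mp hi).2]), Finset.sum_const]
  have step2 : ∀ k ∈ Kt,
      (s.filter (fun i => ci (a i) = k)).card • widthSet Eall d T (compOf k).supp ≤
      ((𝔐.filter (fun B =>
        (∃ v ∈ suppF B, ci v = k) ∧ ∃ v ∈ suppF B, k < ci v)).card : ℕ)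
        • widthSet Eall d T (compOf k).supp := by
    intro k hk
    obtain ⟨i, hi, hik⟩ := Finset.mem_image.mp hk
    have hi0 : i ≠ ⟨0, hn⟩ := (Finset.mem_filter.mp hi).2
    have hk0 : k ≠ ci (a ⟨0, hn⟩) := by
      have := hguard i hi0; omega
    have hle : (s.filter (fun i => ci (a i) = k)).card ≤
        (Finset.univ.filter (fun i : Fin n => ci (a i) = k)).card := by
      apply Finset.card_le_card
      intro j hj
      exact Finset.mem_filter.mpr ⟨Finset.mem_univ j, (Finset.mem_filter.mp hj).2⟩
    have hle2 := le_trans hle (hpay k hk0)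
    simp only [nsmul_eq_mul]
    exact mul_le_mul_of_nonneg_right (Nat.cast_le.mpr hle2) (hw0 _)
  have step3 : ∑ k ∈ Kt, ((𝔐.filter (fun B =>
        (∃ v ∈ suppF B, ci v = k) ∧ ∃ v ∈ suppF B, k < ci v)).card : ℕ)
        • widthSet Eall d T (compOf k).supp
      ≤ ∑ B ∈ 𝔐, c * ∑ e ∈ B, d e := by
    have hrw : ∀ k ∈ Kt, ((𝔐.filter (fun B =>
        (∃ v ∈ suppF B, ci v = k) ∧ ∃ v ∈ suppF B, k < ci v)).card : ℕ)
        • widthSet Eall d T (compOf k).supp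
        = ∑ B ∈ 𝔐, if (∃ v ∈ suppF B, ci v = k) ∧ ∃ v ∈ suppF B, k < ci v
            then widthSet Eall d T (compOf k).supp else 0 := by
      intro k _
      rw [← Finset.sum_filter, Finset.sum_const]
      congr 1
      exact congrArg Finset.card (Finset.filter_congr_decidable _ _ _)
    rw [Finset.sum_congr rfl hrw, Finset.sum_comm]
    apply Finset.sum_le_sum
    intro B hB
    rw [← Finset.sum_filter]
    apply hperB B hB
    intro k hk
    exact (Finset.mem_filter.mp hk).2
  have step4 : ∑ B ∈ 𝔐, c * ∑ e ∈ B, d e ≤ c * ∑ i : Fin n, d s(a i, b i) := by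
    rw [← Finset.mul_sum]
    apply mul_le_mul_of_nonneg_left _ (le_trans zero_le_one hc)
    have hpd : (↑𝔐 : Set (Finset (Sym2 V))).PairwiseDisjoint id := by
      intro B hB B' hB' hne
      exact hdisj B hB B' hB' hne
    have hbu : ∑ B ∈ 𝔐, ∑ e ∈ B, d e = ∑ e ∈ 𝔐.biUnion id, d e :=
      (Finset.sum_biUnion hpd).symm
    rw [hbu]
    have hsub : 𝔐.biUnion id ⊆ Finset.univ.image (fun i : Fin n => s(a i, b i)) := by
      intro e he
      obtain ⟨B, hB, heB⟩ := Finset.mem_biUnion.mp he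
      obtain ⟨i, rfl⟩ := hsubC B hB e heB
      exact Finset.mem_image.mpr ⟨i, Finset.mem_univ i, rfl⟩
    calc ∑ e ∈ 𝔐.biUnion id, d e
        ≤ ∑ e ∈ Finset.univ.image (fun i : Fin n => s(a i, b i)), d e :=
          Finset.sum_le_sum_of_subset_of_nonneg hsub (fun e _ _ => hd e)
      _ = ∑ i : Fin n, d s(a i, b i) :=
          Finset.sum_image (fun x _ y _ h => hinj h)
  calc ∑ i ∈ s, widthSet Eall d T ((graphOf A).connectedComponentMk (a i)).supp
      = ∑ k ∈ Kt, (s.filter (fun i => ci (a i) = k)).card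
          • widthSet Eall d T (compOf k).supp := step1
    _ ≤ ∑ k ∈ Kt, ((𝔐.filter (fun B =>
          (∃ v ∈ suppF B, ci v = k) ∧ ∃ v ∈ suppF B, k < ci v)).card : ℕ)
          • widthSet Eall d T (compOf k).supp := Finset.sum_le_sum step2
    _ ≤ ∑ B ∈ 𝔐, c * ∑ e ∈ B, d e := step3
    _ ≤ c * ∑ i : Fin n, d s(a i, b i) := step4
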